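/- Let (𝒳, μ) be an allocation such that μ is a minimum-weight perfect matching in its own assign-envy graph (G, w) = G(𝒳, μ), and let X_{i₀} ∈ 𝒳 be a bundle whose only incident edge in G(𝒳, μ) is its matching edge (μ⁻¹(X_{i₀}), X_{i₀}). Let 𝒳' be obtained from 𝒳 by replacing X_{i₀} with X_{i₀} ∪ {k} for an item k not in any bundle, let (G', w') = G(𝒳', μ) be the new assign-envy graph (with μ viewed as the corresponding bijection), and let μ' = μ ∖ {(μ⁻¹(X_{i₀}), X_{i₀})}. Then the auxiliary directed graph G'_{μ'} contains no directed cycle. -/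

import Mathlib

/-!  Common setup for fair division: agents `N`, items `I`, monotone valuations
`v : N → Finset I → ℝ`, allocations `(𝒳, μ)` given by a bundle family `X : N → Finset I`
and a bijection `σ : Equiv.Perm N` on indices (agent `i` receives bundle `X (σ i)`),
the assign-envy graph, and its auxiliary directed graph. -/

variable {N I : Type*}

/-- Weight of a walk in a directed graph, given by its list of vertices. -/
def walkWeight {V : Type*} (W : V → V → ℝ) (l : List V) : ℝ :=
  ((l.zip l.tail).map fun p => W p.1 p.2).sum

/-- A (simple) directed cycle, given by the list of its vertices (the closing edge
from the last vertex back to the first is implicit). -/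
def IsDiCycle {V : Type*} (adj : V → V → Prop) (l : List V) : Prop :=
  l ≠ [] ∧ l.Nodup ∧ (l ++ l.take 1).Chain' adj

/-- Total weight of a directed cycle (including the closing edge). -/
def cycleWeight {V : Type*} (W : V → V → ℝ) (l : List V) : ℝ :=
  walkWeight W (l ++ l.take 1)

/-- Adjacency (on indices) of the assign-envy graph `G(𝒳, μ)` of the allocation `(X, σ)`:
agent `i` is joined to its own bundle `X (σ i)` and to every bundle it envies. -/
def aeAdj (v : N → Finset I → ℝ) (X : N → Finset I) (σ : Equiv.Perm N) (i j : N) : Prop :=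
  j = σ i ∨ v i (X (σ i)) < v i (X j)

/-- Edge weights of the assign-envy graph: `w(i, X_j) = −v_i(X_j)`. -/
def aeW (v : N → Finset I → ℝ) (X : N → Finset I) (i j : N) : ℝ := - v i (X j)

/-- Auxiliary directed graph of a bipartite graph on `N ⊕ N` (agents on the left, bundle
indices on the right) with respect to the perfect matching given by a permutation `τ`:
non-matching edges go left-to-right, matching edges are reversed. -/
def aeAux (adj : N → N → Prop) (τ : Equiv.Perm N) : N ⊕ N → N ⊕ N → Prop
  | Sum.inl i, Sum.inr j => adj i j ∧ j ≠ τ i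
  | Sum.inr j, Sum.inl i => j = τ i
  | _, _ => False

/-- Auxiliary weights on the auxiliary directed graph: forward edges keep their weight,
reversed matching edges get the negated weight. -/
def aeAuxW (W : N → N → ℝ) : N ⊕ N → N ⊕ N → ℝ
  | Sum.inl i, Sum.inr j => W i j
  | Sum.inr j, Sum.inl i => - W i j
  | _, _ => 0

/-- EF1 (envy-freeness up to one item) for a family of assigned bundles `Y : N → Finset I`. -/
def EF1 [DecidableEq I] (v : N → Finset I → ℝ) (Y : N → Finset I) : Prop :=
  ∀ i j : N, v i (Y i) ≥ v i (Y j) ∨ ∃ k ∈ Y j, v i (Y i) ≥ v i ((Y j).erase k)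

/-- Auxiliary directed graph with respect to a *partial* matching: the matched agents form the
set `S ⊆ N`, agent `i ∈ S` being matched to bundle `σ i`. Non-matching edges go left-to-right,
matching edges are reversed. -/
def aeAuxPartial (adj : N → N → Prop) (σ : Equiv.Perm N) (S : Set N) :
    N ⊕ N → N ⊕ N → Prop
  | Sum.inl i, Sum.inr j => adj i j ∧ ¬(i ∈ S ∧ j = σ i)
  | Sum.inr j, Sum.inl i => i ∈ S ∧ j = σ i
  | _, _ => False

lemma diCycle_formPerm {α : Type*} [DecidableEq α] {R : α → α → Prop} {C : List α}
    (h : IsDiCycle R C) : ∀ x ∈ C, R x (C.formPerm x) := by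
  obtain ⟨hne, hnd, hch⟩ := h
  intro x hx
  obtain ⟨i, hi, rfl⟩ := List.getElem_of_mem hx
  rw [List.formPerm_apply_getElem _ hnd i hi]
  replace hch := List.isChain_iff_getElem.mp hch
  have hlen : 0 < C.length := List.length_pos_iff.mpr hne
  have htl : (C.take 1).length = 1 := by rw [List.length_take]; omega
  have hch' : ∀ m : ℕ, ∀ _hm : m + 1 < C.length + 1,
      R ((C ++ C.take 1)[m]'(by simp [htl]; omega))
        ((C ++ C.take 1)[m+1]'(by simp [htl]; omega)) := by
    intro m hm
    have := hch m (by simp [htl]; omega)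
    simpa using this
  by_cases hlt : i + 1 < C.length
  · have := hch' i (by omega)
    rw [List.getElem_append_left hi, List.getElem_append_left hlt] at this
    simpa [Nat.mod_eq_of_lt hlt] using this
  · have hi1 : i + 1 = C.length := by omega
    have := hch' i (by omega)
    rw [List.getElem_append_left hi, List.getElem_append_right (by omega)] at this
    have e0 : (i + 1) % C.length = 0 := by rw [hi1]; simp
    simp only [e0]
    simpa [hi1] using this

/-- Let `(X, σ)` be an allocation such that `σ` is a minimum-weight perfect
matching in its own assign-envy graph, and let `X j₀` be a bundle whose only incident edge is
its matching edge. Add to `X j₀` an item `k` contained in no bundle, and remove the matching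
edge of `X j₀` from the matching (`μ' = μ ∖ {(μ⁻¹(X j₀), X j₀)}`, matched agents
`S = {i | σ i ≠ j₀}`). Then the auxiliary directed graph `G'_{μ'}` of the new assign-envy
graph contains no directed cycle. -/
theorem updated_assign_envy_graph_acyclic
    [Fintype N] [Fintype I] [DecidableEq I] [DecidableEq N]
    (v : N → Finset I → ℝ) (X : N → Finset I) (σ : Equiv.Perm N) (j₀ : N) (k : I)
    (hmono : ∀ i : N, ∀ A B : Finset I, A ⊆ B → v i A ≤ v i B)
    (hnonneg : ∀ (i : N) (A : Finset I), 0 ≤ v i A)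
    (hdisj : ∀ i j : N, i ≠ j → Disjoint (X i) (X j))
    (hσmin : ∀ ρ : Equiv.Perm N, (∀ i : N, aeAdj v X σ i (ρ i)) →
      ∑ i : N, aeW v X i (σ i) ≤ ∑ i : N, aeW v X i (ρ i))
    (honly : ∀ i : N, aeAdj v X σ i j₀ → j₀ = σ i)
    (hfresh : ∀ j : N, k ∉ X j) :
    ∀ C : List (N ⊕ N),
      ¬ IsDiCycle
        (aeAuxPartial (aeAdj v (Function.update X j₀ (insert k (X j₀))) σ) σ
          {i : N | σ i ≠ j₀}) C := by
  intro C hC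
  classical
  set X' := Function.update X j₀ (insert k (X j₀)) with hX'
  set R := aeAuxPartial (aeAdj v X' σ) σ {i : N | σ i ≠ j₀} with hRdef
  set π := C.formPerm with hπdef
  have hRπ : ∀ x ∈ C, R x (π x) := diCycle_formPerm hC
  have hle : ∀ i : N, v i (X (σ i)) ≤ v i (X' (σ i)) := by
    intro i
    by_cases h : σ i = j₀
    · rw [hX', h, Function.update_self]
      exact hmono i _ _ (Finset.subset_insert _ _)
    · rw [hX', Function.update_of_ne h]
  have hXeq : ∀ j : N, j ≠ j₀ → X' j = X j := by
    intro j hj; rw [hX', Function.update_of_ne hj]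
  -- key structural fact along the cycle
  have key : ∀ i : N, Sum.inl i ∈ C → ∃ i' : N, π (π (Sum.inl i)) = Sum.inl i' ∧
      v i (X (σ i)) < v i (X (σ i')) := by
    intro i hi
    have h1 := hRπ _ hi
    cases hπi : π (Sum.inl i) with
    | inl i'' => rw [hπi] at h1; exact absurd h1 (by simp [hRdef, aeAuxPartial])
    | inr j =>
      rw [hπi] at h1
      have hjC : Sum.inr j ∈ C := hπi ▸ List.formPerm_apply_mem_of_mem hi
      have h2 := hRπ _ hjC
      cases hπj : π (Sum.inr j) with
      | inr j' => rw [hπj] at h2; exact absurd h2 (by simp [hRdef, aeAuxPartial])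
      | inl i' =>
        rw [hπj] at h2
        have h2' : σ i' ≠ j₀ ∧ j = σ i' := h2
        obtain ⟨hS, hj⟩ := h2'
        have h1' : aeAdj v X' σ i j ∧ ¬(σ i ≠ j₀ ∧ j = σ i) := h1
        obtain ⟨hadj, hnot⟩ := h1'
        refine ⟨i', rfl, ?_⟩
        have hjne : j ≠ σ i := by
          intro h
          apply hnot
          refine ⟨?_, h⟩
          intro hh
          exact hS (by rw [← hj, h, hh])
        have henvy : v i (X' (σ i)) < v i (X' j) := by
          rcases hadj with h | h
          · exact absurd h.symm (Ne.symm hjne)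
          · exact h
        have : v i (X (σ i)) < v i (X j) := by
          rw [← hXeq j (hj ▸ hS)]
          exact lt_of_le_of_lt (hle i) henvy
        rwa [hj] at this
  -- the permutation on agents induced by the cycle
  have hform : ∀ i : N, ∃ i', π (π (Sum.inl i)) = Sum.inl i' := by
    intro i
    rcases Classical.em ((Sum.inl i : N ⊕ N) ∈ C) with hi | hi
    · obtain ⟨i', he, _⟩ := key i hi; exact ⟨i', he⟩
    · have hfix : π (Sum.inl i) = Sum.inl i := List.formPerm_apply_of_notMem hi
      exact ⟨i, by rw [hfix]; exact hfix⟩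
  set c : N → N := fun i => (π (π (Sum.inl i))).elim id id with hcdef
  have hc : ∀ i, π (π (Sum.inl i)) = Sum.inl (c i) := by
    intro i
    obtain ⟨i', h⟩ := hform i
    rw [hcdef]; simp only [h, Sum.elim_inl, id]
  have hcinj : Function.Injective c := by
    intro a b hab
    have h1 : π (π (Sum.inl a)) = π (π (Sum.inl b)) := by
      rw [hc a, hc b, hab]
    exact Sum.inl.inj (π.injective (π.injective h1))
  have hbij : Function.Bijective c := Finite.injective_iff_bijective.mp hcinj
  set ρ : Equiv.Perm N := (Equiv.ofBijective c hbij).trans σ with hρdef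
  have hρ : ∀ i, ρ i = σ (c i) := fun i => rfl
  have hcfix : ∀ i : N, Sum.inl i ∉ C → c i = i := by
    intro i hi
    have hfix : π (Sum.inl i) = Sum.inl i := List.formPerm_apply_of_notMem hi
    have := hc i
    rw [hfix, hfix] at this
    exact (Sum.inl.inj this).symm
  have hcmem : ∀ i : N, Sum.inl i ∈ C → v i (X (σ i)) < v i (X (σ (c i))) := by
    intro i hi
    obtain ⟨i', he, hlt⟩ := key i hi
    have : c i = i' := by
      have h2 := hc i; rw [he] at h2; exact (Sum.inl.inj h2).symm
    rwa [this]
  have hadjρ : ∀ i, aeAdj v X σ i (ρ i) := by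
    intro i
    rcases Classical.em ((Sum.inl i : N ⊕ N) ∈ C) with hi | hi
    · refine Or.inr ?_
      rw [hρ i]
      exact hcmem i hi
    · refine Or.inl ?_
      rw [hρ i, hcfix i hi]
  have hex : ∃ i, Sum.inl i ∈ C := by
    obtain ⟨x, hx⟩ := List.exists_mem_of_ne_nil C hC.1
    cases x with
    | inl i => exact ⟨i, hx⟩
    | inr j =>
      have h2 := hRπ _ hx
      cases hπj : π (Sum.inr j) with
      | inl i => exact ⟨i, hπj ▸ List.formPerm_apply_mem_of_mem hx⟩
      | inr j' => rw [hπj] at h2; exact absurd h2 (by simp [hRdef, aeAuxPartial])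
  obtain ⟨i₀, hi₀⟩ := hex
  have hsum : ∑ i : N, aeW v X i (ρ i) < ∑ i : N, aeW v X i (σ i) := by
    apply Finset.sum_lt_sum
    · intro i _
      rcases Classical.em ((Sum.inl i : N ⊕ N) ∈ C) with hi | hi
      · have := hcmem i hi
        rw [hρ i]; unfold aeW; linarith
      · rw [hρ i, hcfix i hi]
    · refine ⟨i₀, Finset.mem_univ _, ?_⟩
      have := hcmem i₀ hi₀
      rw [hρ i₀]; unfold aeW; linarith
  linarith [hσmin ρ hadjρ]
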